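/- Let ε ∈ {−1, 1}, let k : (0, ∞) → ℝ be continuous, and let s : (0, ∞) → ℝ be differentiable, nowhere zero, and satisfy the Abel equation of the second kind s(x)·s'(x) = (k(x)/(2·√(2x)))·s(x) − ε for all x > 0. Define w : (0, ∞) → ℝ by w(x) := exp(−ε·∫₁ˣ s(u)^{−2} du). Then w is twice differentiable and satisfies x·w(x)²·(w'(x)² + w(x)·w''(x))² + ε·(k(x)²/2)·w(x)³·w'(x)³ = 0 for all x > 0. -/

import Mathlib

/-- A nowhere-vanishing solution of the Abel equation of the second kind
`s·s' = (k/(2√(2x)))·s − ε` yields, via `w = exp(−ε·∫ s⁻²)`, a solution of the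
curvature equation `x·w²·((w')² + w·w'')² + ε·(k²/2)·w³·(w')³ = 0` of a graph
immersion. -/
theorem stmt_10 (ε : ℝ) (hε : ε = 1 ∨ ε = -1)
    (k : ℝ → ℝ) (hk : ContinuousOn k (Set.Ioi 0))
    (s : ℝ → ℝ) (hs : ∀ x ∈ Set.Ioi (0:ℝ), DifferentiableAt ℝ s x)
    (hs0 : ∀ x ∈ Set.Ioi (0:ℝ), s x ≠ 0)
    (habel : ∀ x ∈ Set.Ioi (0:ℝ),
      s x * deriv s x = (k x / (2 * Real.sqrt (2 * x))) * s x - ε)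
    (w : ℝ → ℝ) (hw : ∀ x, w x = Real.exp (-ε * ∫ u in (1:ℝ)..x, ((s u)^2)⁻¹)) :
    (∀ x ∈ Set.Ioi (0:ℝ), DifferentiableAt ℝ w x ∧ DifferentiableAt ℝ (deriv w) x) ∧
    (∀ x ∈ Set.Ioi (0:ℝ),
      x * (w x)^2 * ((deriv w x)^2 + w x * iteratedDeriv 2 w x)^2
        + ε * ((k x)^2 / 2) * (w x)^3 * (deriv w x)^3 = 0) := by
  have hwfun : w = fun x => Real.exp (-ε * ∫ u in (1:ℝ)..x, ((s u)^2)⁻¹) := funext hw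
  set g : ℝ → ℝ := fun u => ((s u)^2)⁻¹ with hg
  -- continuity of g on Ioi 0
  have hgc : ∀ x ∈ Set.Ioi (0:ℝ), ContinuousAt g x := by
    intro x hx
    exact ((hs x hx).continuousAt.pow 2).inv₀ (pow_ne_zero 2 (hs0 x hx))
  have hgcon : ContinuousOn g (Set.Ioi 0) := fun x hx => (hgc x hx).continuousWithinAt
  -- interval integrability of g on [1, x] for x > 0
  have hgint : ∀ x ∈ Set.Ioi (0:ℝ), IntervalIntegrable g MeasureTheory.volume 1 x := by
    intro x hx
    apply (hgcon.mono ?_).intervalIntegrable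
    intro u hu
    rcases le_total (1:ℝ) x with h | h
    · rw [Set.uIcc_of_le h] at hu; exact lt_of_lt_of_le one_pos hu.1
    · rw [Set.uIcc_of_ge h] at hu; exact lt_of_lt_of_le hx hu.1
  -- derivative of w
  have hW : ∀ x ∈ Set.Ioi (0:ℝ), HasDerivAt w (-ε * g x * w x) x := by
    intro x hx
    have hF : HasDerivAt (fun y => ∫ u in (1:ℝ)..y, g u) (g x) x :=
      intervalIntegral.integral_hasDerivAt_right (hgint x hx)
        (ContinuousOn.stronglyMeasurableAtFilter isOpen_Ioi hgcon x hx) (hgc x hx)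
    have := ((hF.const_mul (-ε)).exp)
    rw [hwfun]
    simpa [mul_comm, mul_assoc, mul_left_comm] using this
  have hW' : ∀ x ∈ Set.Ioi (0:ℝ), deriv w x = -ε * g x * w x := by
    intro x hx; exact (hW x hx).deriv
  -- deriv w agrees with the explicit formula on a neighborhood
  have hEq : ∀ x ∈ Set.Ioi (0:ℝ),
      deriv w =ᶠ[nhds x] fun y => -ε * g y * w y := by
    intro x hx
    filter_upwards [isOpen_Ioi.mem_nhds hx] with y hy using hW' y hy
  -- second derivative
  have hW2 : ∀ x ∈ Set.Ioi (0:ℝ),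
      HasDerivAt (deriv w)
        (-ε * (-(2 * s x * deriv s x) / ((s x)^2)^2) * w x
          + -ε * g x * (-ε * g x * w x)) x := by
    intro x hx
    have hgd : HasDerivAt g (-(2 * s x * deriv s x) / ((s x)^2)^2) x := by
      have h1 : HasDerivAt (fun y => (s y)^2) (2 * s x * deriv s x) x := by
        simpa [mul_comm, mul_assoc] using
          (((hs x hx).hasDerivAt).fun_pow 2)
      simpa [hg] using h1.fun_inv (pow_ne_zero 2 (hs0 x hx))
    have h2 : HasDerivAt (fun y => -ε * g y * w y)
        (-ε * (-(2 * s x * deriv s x) / ((s x)^2)^2) * w x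
          + -ε * g x * (-ε * g x * w x)) x := by
      simpa using ((hgd.const_mul (-ε)).fun_mul (hW x hx))
    exact h2.congr_of_eventuallyEq (hEq x hx)
  constructor
  · intro x hx
    exact ⟨(hW x hx).differentiableAt, (hW2 x hx).differentiableAt⟩
  · intro x hx
    have hx0 : (0:ℝ) < x := hx
    have hS : s x ≠ 0 := hs0 x hx
    have hr : Real.sqrt (2 * x) ^ 2 = 2 * x :=
      Real.sq_sqrt (by linarith)
    have hrpos : Real.sqrt (2 * x) > 0 := Real.sqrt_pos.mpr (by linarith)
    have hrne : Real.sqrt (2 * x) ≠ 0 := ne_of_gt hrpos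
    have he2 : ε ^ 2 = 1 := by rcases hε with h | h <;> simp [h]
    have hd1 : deriv w x = -ε * g x * w x := hW' x hx
    have hd2 : iteratedDeriv 2 w x
        = -ε * (-(2 * s x * deriv s x) / ((s x)^2)^2) * w x
          + -ε * g x * (-ε * g x * w x) := by
      rw [iteratedDeriv_succ, iteratedDeriv_one]
      exact (hW2 x hx).deriv
    have habx := habel x hx
    have hds : deriv s x = ((k x / (2 * Real.sqrt (2 * x))) * s x - ε) / s x := by
      field_simp at habx ⊢
      linarith [habx]
    rw [hd1, hd2, hds, hg]
    set r := Real.sqrt (2 * x) with hrdef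
    clear_value r
    field_simp
    ring_nf
    linear_combination (-ε^4*w x^6*s x^2*k x^2) * hr
      + (-2*x*ε^2*w x^6*s x^2*k x^2) * he2
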